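/- Let p, q ∈ ℝ² with ‖p − q‖ ≤ ℓ_p, where ℓ_p ≥ ℓ_q > 0. Then for any choice of anchoring of a segment of length ℓ_q at q (in the 2P model: q is the top or bottom endpoint), there exists a rotation angle θ such that the segment of length ℓ_p anchored at its bottom endpoint p, rotated by θ, intersects the segment of length ℓ_q anchored at q rotated by θ. Consequently, if two segments anchored in the 2P model at p and q never intersect under simultaneous rotation, then the same segments re-anchored at their bottom endpoints also never intersect. -/

import Mathlib

open Real Set Metric

/-- The rotated vertical unit direction `(-sin θ, cos θ)`. -/
noncomputable def uDir (θ : ℝ) : EuclideanSpace ℝ (Fin 2) := !₂[-Real.sin θ, Real.cos θ]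

/-- Segment of length `ℓ` anchored at its bottom endpoint `p`, rotated by angle `θ`. -/
noncomputable def seg (p : EuclideanSpace ℝ (Fin 2)) (ℓ θ : ℝ) : Set (EuclideanSpace ℝ (Fin 2)) :=
  (fun t : ℝ => p + t • uDir θ) '' Set.Icc 0 ℓ

/-- 2P-model segment: anchored at its bottom endpoint (`top = false`) or at its top endpoint
(`top = true`). -/
noncomputable def seg2P (p : EuclideanSpace ℝ (Fin 2)) (top : Bool) (ℓ θ : ℝ) :
    Set (EuclideanSpace ℝ (Fin 2)) :=
  (fun t : ℝ => p + (if top then -t else t) • uDir θ) '' Set.Icc 0 ℓ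

lemma uDir_zero (θ : ℝ) : uDir θ 0 = -Real.sin θ := rfl
lemma uDir_one (θ : ℝ) : uDir θ 1 = Real.cos θ := rfl

lemma norm_uDir (θ : ℝ) : ‖uDir θ‖ = 1 := by
  rw [EuclideanSpace.norm_eq, Fin.sum_univ_two, uDir_zero, uDir_one]
  rw [Real.norm_eq_abs, Real.norm_eq_abs, sq_abs, sq_abs, neg_sq,
    Real.sin_sq_add_cos_sq, Real.sqrt_one]

/-- Every unit vector in the plane is `uDir θ` for some `θ`. -/
lemma exists_uDir (v : EuclideanSpace ℝ (Fin 2)) (hv : ‖v‖ = 1) : ∃ θ, uDir θ = v := by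
  have hsum : (v 0) ^ 2 + (v 1) ^ 2 = 1 := by
    have h := EuclideanSpace.norm_eq v
    rw [Fin.sum_univ_two, hv] at h
    simp only [Real.norm_eq_abs, sq_abs] at h
    have := Real.sqrt_eq_one.mp h.symm
    linarith
  set z : ℂ := ⟨v 1, -(v 0)⟩ with hz
  have habs : ‖z‖ = 1 := by
    rw [Complex.norm_def, Complex.normSq_mk]
    rw [show v 1 * v 1 + -(v 0) * -(v 0) = (v 0) ^ 2 + (v 1) ^ 2 by ring, hsum]
    exact Real.sqrt_one
  have hzne : z ≠ 0 := by
    intro h0; rw [h0] at habs; simp at habs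
  refine ⟨z.arg, ?_⟩
  have hc : Real.cos z.arg = v 1 := by
    rw [Complex.cos_arg hzne, habs]; simp [hz]
  have hs : Real.sin z.arg = -(v 0) := by
    rw [Complex.sin_arg, habs]; simp [hz]
  ext i
  fin_cases i
  · show uDir z.arg 0 = v 0
    rw [uDir_zero, hs]; ring
  · show uDir z.arg 1 = v 1
    rw [uDir_one, hc]

/-- If `dist p q ≤ ℓp`, any anchoring of the `p`-segment can be rotated to reach `q`. -/
lemma meets (p q : EuclideanSpace ℝ (Fin 2)) (ℓp ℓq : ℝ)
    (hℓq : 0 ≤ ℓq) (hℓp : 0 ≤ ℓp) (hdist : dist p q ≤ ℓp) (ap aq : Bool) :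
    ∃ θ : ℝ, (seg2P p ap ℓp θ ∩ seg2P q aq ℓq θ).Nonempty := by
  have hq : ∀ θ, q ∈ seg2P q aq ℓq θ := by
    intro θ
    exact ⟨0, ⟨le_refl 0, hℓq⟩, by cases aq <;> simp⟩
  rcases eq_or_ne p q with rfl | hne
  · exact ⟨0, p, ⟨0, ⟨le_refl 0, hℓp⟩, by cases ap <;> simp⟩, hq 0⟩
  · set d := dist p q with hdd
    have hd : 0 < d := dist_pos.mpr hne
    set w : EuclideanSpace ℝ (Fin 2) := d⁻¹ • (if ap then p - q else q - p) with hw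
    have hnw : ‖w‖ = 1 := by
      rw [hw, norm_smul]
      have h1 : ‖q - p‖ = d := by rw [hdd, dist_comm, dist_eq_norm]
      have h2 : ‖p - q‖ = d := by rw [hdd, dist_eq_norm]
      cases ap <;> simp [h1, h2, abs_of_pos hd, inv_mul_cancel₀ hd.ne']
    obtain ⟨θ, hθ⟩ := exists_uDir w hnw
    refine ⟨θ, q, ⟨d, ⟨hd.le, hdist⟩, ?_⟩, hq θ⟩
    rw [hθ, hw]
    cases ap
    · simp only [Bool.false_eq_true, if_false]
      rw [smul_smul, mul_inv_cancel₀ hd.ne', one_smul]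
      abel
    · simp only [if_true]
      rw [smul_smul, neg_mul, mul_inv_cancel₀ hd.ne', neg_smul, one_smul]
      abel

lemma seg_eq (p : EuclideanSpace ℝ (Fin 2)) (ℓ θ : ℝ) : seg p ℓ θ = seg2P p false ℓ θ := by
  simp [seg, seg2P]

theorem stmt2 (p q : EuclideanSpace ℝ (Fin 2)) (ℓp ℓq : ℝ)
    (hℓq : 0 < ℓq) (hpq : ℓq ≤ ℓp) :
    (dist p q ≤ ℓp →
      ∀ aq : Bool, ∃ θ : ℝ, (seg p ℓp θ ∩ seg2P q aq ℓq θ).Nonempty) ∧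
    (∀ ap aq : Bool,
      (∀ θ : ℝ, Disjoint (seg2P p ap ℓp θ) (seg2P q aq ℓq θ)) →
      ∀ θ : ℝ, Disjoint (seg p ℓp θ) (seg q ℓq θ)) := by
  have hℓp : 0 < ℓp := lt_of_lt_of_le hℓq hpq
  constructor
  · intro hdist aq
    obtain ⟨θ, hθ⟩ := meets p q ℓp ℓq hℓq.le hℓp.le hdist false aq
    exact ⟨θ, by rwa [seg_eq]⟩
  · intro ap aq h θ
    rw [Set.disjoint_left]
    rintro x ⟨t, ⟨ht0, htp⟩, rfl⟩ ⟨s, ⟨hs0, hsq⟩, hx⟩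
    -- p + t • u = q + s • u  ⟹  dist p q = |s - t| ≤ ℓp
    have hx' : q + s • uDir θ = p + t • uDir θ := hx
    have hdiff : p - q = (s - t) • uDir θ := by
      rw [sub_smul, sub_eq_sub_iff_add_eq_add, add_comm (s • uDir θ) q]
      exact hx'.symm
    have hdist : dist p q ≤ ℓp := by
      rw [dist_eq_norm, hdiff, norm_smul, norm_uDir, mul_one, Real.norm_eq_abs]
      rw [abs_sub_le_iff]
      constructor <;> linarith
    obtain ⟨θ', x', hx'⟩ := meets p q ℓp ℓq hℓq.le hℓp.le hdist ap aq
    exact Set.disjoint_left.mp (h θ') hx'.1 hx'.2
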